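/- Let N ≥ 2 and p > N. Suppose u ≥ 0 is classically p-superharmonic on {x : ‖x‖ > 1} ⊆ EuclideanSpace ℝ (Fin N). Then there exists C > 0 such that m(r) = inf { u(x) : r < ‖x‖ < 2r } satisfies m(r) ≤ C·r^((p−N)/(p−1)) for all r ≥ 2. -/

import Mathlib

open MeasureTheory Filter Real Matrix
open scoped RealInnerProductSpace

/-- The vector field `F_p u (x) = ‖∇u(x)‖^(p-2) • ∇u(x)` (real power; equal to `0`
when `∇u(x) = 0`). -/
noncomputable def pFlux (N : ℕ) (p : ℝ) (u : EuclideanSpace ℝ (Fin N) → ℝ)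
    (x : EuclideanSpace ℝ (Fin N)) : EuclideanSpace ℝ (Fin N) :=
  ‖gradient u x‖ ^ (p - 2) • gradient u x

/-- The `p`-Laplacian `Δ_p u (x) = div (F_p u) (x)`. -/
noncomputable def pLaplacian (N : ℕ) (p : ℝ) (u : EuclideanSpace ℝ (Fin N) → ℝ)
    (x : EuclideanSpace ℝ (Fin N)) : ℝ :=
  ∑ i : Fin N, ⟪fderiv ℝ (pFlux N p u) x (EuclideanSpace.basisFun (Fin N) ℝ i),
      EuclideanSpace.basisFun (Fin N) ℝ i⟫

/-- `u` is a classical supersolution of `-Δ_p u ≥ g` on `Ω`. -/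
def IsPSupersolution (N : ℕ) (p : ℝ) (u : EuclideanSpace ℝ (Fin N) → ℝ)
    (g : EuclideanSpace ℝ (Fin N) → ℝ) (Ω : Set (EuclideanSpace ℝ (Fin N))) : Prop :=
  ContDiffOn ℝ 1 u Ω ∧ DifferentiableOn ℝ (pFlux N p u) Ω ∧
    ∀ x ∈ Ω, -pLaplacian N p u x ≥ g x

variable {N : ℕ}
local notation "E" => EuclideanSpace ℝ (Fin N)
local notation "bE" => EuclideanSpace.basisFun (Fin N) ℝ

lemma norm_rpow_eq_inner (γ : ℝ) (x : E) : (fun x : E => ‖x‖ ^ γ) x = ⟪x, x⟫ ^ (γ/2) := by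
  rw [real_inner_self_eq_norm_sq, ← Real.rpow_natCast ‖x‖ 2, ← Real.rpow_mul (norm_nonneg x),
    show (2:ℕ) * (γ/2) = γ by push_cast; ring]

lemma inner_self_rpow (γ : ℝ) (x : E) : ⟪x, x⟫ ^ γ = ‖x‖ ^ (2*γ) := by
  rw [real_inner_self_eq_norm_sq, ← Real.rpow_natCast ‖x‖ 2, ← Real.rpow_mul (norm_nonneg x)]
  norm_num

lemma hasFDerivAt_norm_rpow_ne (γ : ℝ) {x : E} (hx : x ≠ 0) :
    HasFDerivAt (fun x : E => ‖x‖ ^ γ) ((γ * ‖x‖ ^ (γ - 2)) • (innerSL ℝ x)) x := by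
  have h1 : HasFDerivAt (fun x : E => ⟪x, x⟫) ((fderivInnerCLM ℝ (x, x)).comp
      ((ContinuousLinearMap.id ℝ E).prod (ContinuousLinearMap.id ℝ E))) x :=
    (hasFDerivAt_id x).inner ℝ (hasFDerivAt_id x)
  have hne : ⟪x, x⟫ ≠ 0 := by
    rw [real_inner_self_eq_norm_sq]
    exact pow_ne_zero 2 (norm_ne_zero_iff.2 hx)
  have h2 := h1.rpow_const (p := γ/2) (Or.inl hne)
  have h3 : HasFDerivAt (fun x : E => ‖x‖ ^ γ)
      ((γ/2 * ⟪x, x⟫ ^ (γ/2 - 1)) • ((fderivInnerCLM ℝ (x, x)).comp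
      ((ContinuousLinearMap.id ℝ E).prod (ContinuousLinearMap.id ℝ E)))) x :=
    HasFDerivAt.congr_of_eventuallyEq h2 (by
      filter_upwards with y using (norm_rpow_eq_inner γ y))
  refine h3.congr_fderiv (Eq.symm ?_)
  ext w
  rw [ContinuousLinearMap.smul_apply, ContinuousLinearMap.smul_apply,
    ContinuousLinearMap.comp_apply, ContinuousLinearMap.prod_apply,
    ContinuousLinearMap.id_apply, fderivInnerCLM_apply, innerSL_apply_apply,
    inner_self_rpow, real_inner_comm w x,
    show 2 * (γ/2 - 1) = γ - 2 by ring]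
  simp only [smul_eq_mul]
  ring

/-- A continuous linear map of "radial" form `w ↦ c • w + (c' * ⟪y, w⟫) • y`. -/
noncomputable def radialCLM (c c' : ℝ) (y : EuclideanSpace ℝ (Fin N)) :
    EuclideanSpace ℝ (Fin N) →L[ℝ] EuclideanSpace ℝ (Fin N) :=
  c • ContinuousLinearMap.id ℝ (EuclideanSpace ℝ (Fin N)) + (c' • innerSL ℝ y).smulRight y

lemma radialCLM_apply (c c' : ℝ) (y w : E) :
    radialCLM (N := N) c c' y w = c • w + (c' * ⟪y, w⟫) • y := by
  simp [radialCLM, smul_smul]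


lemma hasFDerivAt_rpow_smul (γ : ℝ) {x : E} (hx : x ≠ 0) :
    HasFDerivAt (fun x : E => ‖x‖ ^ γ • x)
      (radialCLM (N := N) (‖x‖ ^ γ) (γ * ‖x‖ ^ (γ - 2)) x) x := by
  have h := (hasFDerivAt_norm_rpow_ne γ hx).smul (hasFDerivAt_id x)
  exact h

lemma hasGradientAt_norm_rpow (β : ℝ) {x : E} (hx : x ≠ 0) :
    HasGradientAt (fun x : E => ‖x‖ ^ β) ((β * ‖x‖ ^ (β - 2)) • x) x := by
  rw [hasGradientAt_iff_hasFDerivAt]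
  refine (hasFDerivAt_norm_rpow_ne β hx).congr_fderiv (Eq.symm ?_)
  ext w
  simp [InnerProductSpace.toDual_apply_apply, inner_smul_left]

lemma basis_inner_self (i : Fin N) : ⟪(bE) i, (bE) i⟫ = 1 := by
  have := (EuclideanSpace.basisFun (Fin N) ℝ).orthonormal.1 i
  rw [real_inner_self_eq_norm_sq, this]; norm_num

lemma sum_inner_sq (y : E) : ∑ i, ⟪y, (bE) i⟫ * ⟪(bE) i, y⟫ = ‖y‖ ^ 2 := by
  rw [(EuclideanSpace.basisFun (Fin N) ℝ).sum_inner_mul_inner y y,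
    real_inner_self_eq_norm_sq]

lemma sum_inner_radial_comp (c₁ c₂ d₁ d₂ : ℝ) (y : E) :
    ∑ i, ⟪radialCLM (N := N) c₁ c₂ y (radialCLM (N := N) d₁ d₂ y ((bE) i)), (bE) i⟫
      = c₁*d₁*N + (c₁*d₂ + c₂*d₁ + c₂*d₂*‖y‖^2)*‖y‖^2 := by
  have hterm : ∀ i, ⟪radialCLM (N := N) c₁ c₂ y (radialCLM (N := N) d₁ d₂ y ((bE) i)), (bE) i⟫
      = c₁*d₁ + (c₁*d₂ + c₂*d₁ + c₂*d₂*‖y‖^2)*(⟪y, (bE) i⟫ * ⟪(bE) i, y⟫) := by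
    intro i
    rw [radialCLM_apply, radialCLM_apply]
    simp only [inner_add_left, inner_add_right, real_inner_smul_left, real_inner_smul_right,
      real_inner_self_eq_norm_sq]
    rw [real_inner_comm y ((bE) i), (EuclideanSpace.basisFun (Fin N) ℝ).orthonormal.1 i]
    ring
  rw [Finset.sum_congr rfl (fun i _ => hterm i), Finset.sum_add_distrib,
    ← Finset.mul_sum (Finset.univ) (fun i => (⟪y, (bE) i⟫ * ⟪(bE) i, y⟫)) _, sum_inner_sq]
  simp [Finset.sum_const, mul_comm]

lemma sum_inner_radial_psd {c₁ c₂ : ℝ} (hc₁ : 0 ≤ c₁) (hc₂ : 0 ≤ c₂) (y : E)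
    (H : EuclideanSpace ℝ (Fin N) →L[ℝ] EuclideanSpace ℝ (Fin N))
    (hH : ∀ w, 0 ≤ ⟪H w, w⟫) :
    0 ≤ ∑ i, ⟪radialCLM (N := N) c₁ c₂ y (H ((bE) i)), (bE) i⟫ := by
  have hterm : ∀ i, ⟪radialCLM (N := N) c₁ c₂ y (H ((bE) i)), (bE) i⟫
      = c₁ * ⟪H ((bE) i), (bE) i⟫ + c₂ * (⟪y, H ((bE) i)⟫ * ⟪(bE) i, y⟫) := by
    intro i
    rw [radialCLM_apply]
    simp only [inner_add_left, real_inner_smul_left]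
    rw [real_inner_comm y ((bE) i)]
    ring
  rw [Finset.sum_congr rfl (fun i _ => hterm i), Finset.sum_add_distrib]
  have h1 : 0 ≤ ∑ i, c₁ * ⟪H ((bE) i), (bE) i⟫ :=
    Finset.sum_nonneg fun i _ => mul_nonneg hc₁ (hH _)
  have h2 : ∑ i, c₂ * (⟪y, H ((bE) i)⟫ * ⟪(bE) i, y⟫) = c₂ * ⟪H y, y⟫ := by
    rw [← Finset.mul_sum]
    congr 1
    have hy : y = ∑ i, ⟪(bE) i, y⟫ • (bE) i :=
      ((EuclideanSpace.basisFun (Fin N) ℝ).sum_repr' y).symm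
    calc ∑ i, ⟪y, H ((bE) i)⟫ * ⟪(bE) i, y⟫
        = ∑ i, ⟪H (⟪(bE) i, y⟫ • (bE) i), y⟫ := by
          refine Finset.sum_congr rfl fun i _ => ?_
          rw [ContinuousLinearMap.map_smul, real_inner_smul_left, real_inner_comm y (H ((bE) i))]
          ring
      _ = ⟪H y, y⟫ := by
          rw [← sum_inner, ← map_sum]
          congr 2
          exact ((EuclideanSpace.basisFun (Fin N) ℝ).sum_repr' y)
  rw [h2]
  exact add_nonneg h1 (mul_nonneg hc₂ (hH y))


lemma gradient_eq_pflux_inv {p : ℝ} (hp : 2 < p) (u : E → ℝ) (x : E) :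
    gradient u x = ‖pFlux N p u x‖ ^ ((2-p)/(p-1)) • pFlux N p u x := by
  set a := gradient u x with ha
  by_cases h0 : a = 0
  · simp [pFlux, ← ha, h0]
  · have hna : 0 < ‖a‖ := norm_pos_iff.2 h0
    have hnorm : ‖pFlux N p u x‖ = ‖a‖ ^ (p-1) := by
      rw [pFlux, ← ha, norm_smul, Real.norm_eq_abs, abs_of_nonneg (Real.rpow_nonneg (norm_nonneg a) _)]
      nth_rewrite 2 [← Real.rpow_one ‖a‖]
      rw [← Real.rpow_add hna, show p - 2 + 1 = p - 1 by ring]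
    have hp1 : p - 1 ≠ 0 := by linarith
    rw [hnorm, pFlux, ← ha, smul_smul, ← Real.rpow_mul (norm_nonneg a),
      ← Real.rpow_add hna, show (p-1) * ((2-p)/(p-1)) + (p-2) = 0 by field_simp; ring,
      Real.rpow_zero, one_smul]

lemma second_deriv_test {h : E → ℝ} {g : E → E} {x₀ : E} {H : E →L[ℝ] E}
    (hg : ∀ᶠ x in nhds x₀, HasGradientAt h (g x) x) (hH : HasFDerivAt g H x₀)
    (hmin : IsLocalMin h x₀) (w : E) : 0 ≤ ⟪H w, w⟫ := by
  by_contra hcon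
  push_neg at hcon
  set L : ℝ → E := fun s => x₀ + s • w with hL
  have hL0 : L 0 = x₀ := by simp [hL]
  have hLtend : Filter.Tendsto L (nhds 0) (nhds x₀) := by
    have hc : Continuous L := continuous_const.add (continuous_id.smul continuous_const)
    have := hc.continuousAt (x := (0:ℝ))
    rw [ContinuousAt, hL0] at this
    exact this
  have hLd : ∀ s : ℝ, HasDerivAt L w s := fun s => by
    have h' := ((hasDerivAt_id s).smul_const w).const_add x₀
    rw [one_smul] at h'
    exact h'
  set φ : ℝ → ℝ := fun s => h (L s) with hφ
  set ψ : ℝ → ℝ := fun s => ⟪g (L s), w⟫ with hψ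
  -- derivative of φ
  have hφ' : ∀ᶠ s in nhds (0:ℝ), HasDerivAt φ (ψ s) s := by
    filter_upwards [hLtend.eventually hg] with s hs
    have := hs.hasFDerivAt.comp_hasDerivAt s (hLd s)
    simp only [InnerProductSpace.toDual_apply_apply] at this
    exact this
  -- derivative of ψ at 0
  have hψ0 : HasDerivAt ψ ⟪H w, w⟫ 0 := by
    have hgL : HasDerivAt (fun s => g (L s)) (H w) 0 := by
      exact (hL0.symm ▸ hH : HasFDerivAt g H (L 0)).comp_hasDerivAt 0 (hLd 0)
    have := (hgL.inner ℝ (hasDerivAt_const (0:ℝ) w))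
    simpa using this
  -- local min of φ at 0
  have hminφ : IsLocalMin φ 0 := by
    have := hLtend.eventually hmin
    simpa [hφ, hL0, IsLocalMin, IsMinFilter] using this
  have hψzero : ψ 0 = 0 := hminφ.hasDerivAt_eq_zero (hφ'.self_of_nhds)
  -- slope of ψ negative near 0
  have hslope : ∀ᶠ s in nhds (0:ℝ), s ≠ 0 → 0 < s → ψ s < 0 := by
    have h1 := hasDerivAt_iff_tendsto_slope.1 hψ0
    have h2 : ∀ᶠ s in nhdsWithin (0:ℝ) {(0:ℝ)}ᶜ, slope ψ 0 s < 0 :=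
      h1.eventually (Iio_mem_nhds hcon)
    rw [eventually_nhdsWithin_iff] at h2
    filter_upwards [h2] with s hs hne hpos
    have := hs hne
    rw [slope_def_field] at this
    have : (ψ s - ψ 0) / (s - 0) < 0 := by simpa [div_eq_div_iff] using this
    rw [hψzero, sub_zero, sub_zero, div_neg_iff] at this
    rcases this with ⟨h3, h4⟩ | ⟨h3, h4⟩
    · linarith
    · exact h3
  obtain ⟨ε, hε, hprop⟩ := Metric.eventually_nhds_iff.1 (hφ'.and (hminφ.and hslope))
  set s₁ : ℝ := ε/2 with hs₁
  have hs₁pos : 0 < s₁ := by positivity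
  have hmem : ∀ s : ℝ, s ∈ Set.Icc (0:ℝ) s₁ → dist s (0:ℝ) < ε := by
    intro s hs
    rw [Real.dist_eq, sub_zero, abs_of_nonneg hs.1]
    have := hs.2
    simp only [hs₁] at this ⊢
    linarith
  have hanti : StrictAntiOn φ (Set.Icc 0 s₁) := by
    apply strictAntiOn_of_deriv_neg (convex_Icc 0 s₁)
    · intro s hs
      exact ((hprop (hmem s hs)).1).continuousAt.continuousWithinAt
    · intro s hs
      rw [interior_Icc] at hs
      have hd := (hprop (hmem s ⟨le_of_lt hs.1, le_of_lt hs.2⟩)).1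
      rw [hd.deriv]
      exact (hprop (hmem s ⟨le_of_lt hs.1, le_of_lt hs.2⟩)).2.2 (ne_of_gt hs.1) hs.1
  have h5 : φ s₁ < φ 0 := hanti (Set.left_mem_Icc.2 (le_of_lt hs₁pos))
    (Set.right_mem_Icc.2 (le_of_lt hs₁pos)) hs₁pos
  have h6 : φ 0 ≤ φ s₁ := (hprop (hmem s₁ (Set.right_mem_Icc.2 (le_of_lt hs₁pos)))).2.1
  linarith


lemma hasFDerivAt_norm' {x : E} (hx : x ≠ 0) :
    HasFDerivAt (fun x : E => ‖x‖) ((‖x‖ ^ ((-1):ℝ)) • innerSL ℝ x) x := by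
  have h := hasFDerivAt_norm_rpow_ne (N := N) 1 hx
  have he : (fun x : E => ‖x‖ ^ (1:ℝ)) = fun x : E => ‖x‖ := by
    funext y; rw [Real.rpow_one]
  rw [he, show (1:ℝ)-2 = -1 by norm_num, one_mul] at h
  exact h

lemma HasGradientAt.sub'' {f g : E → ℝ} {a b x : E}
    (hf : HasGradientAt f a x) (hg : HasGradientAt g b x) :
    HasGradientAt (fun y => f y - g y) (a - b) x := by
  rw [hasGradientAt_iff_hasFDerivAt] at *
  have h := hf.sub hg
  rwa [← map_sub] at h

lemma norm_pFlux {p : ℝ} (hp : 2 < p) (u : E → ℝ) (x : E) :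
    ‖pFlux N p u x‖ = ‖gradient u x‖ ^ (p-1) := by
  set a := gradient u x with ha
  by_cases h0 : a = 0
  · rw [pFlux, ← ha, h0]
    simp [Real.zero_rpow (show p - 1 ≠ 0 by linarith)]
  · have hna : 0 < ‖a‖ := norm_pos_iff.2 h0
    rw [pFlux, ← ha, norm_smul, Real.norm_eq_abs,
      abs_of_nonneg (Real.rpow_nonneg (norm_nonneg a) _)]
    nth_rewrite 2 [← Real.rpow_one ‖a‖]
    rw [← Real.rpow_add hna, show p - 2 + 1 = p - 1 by ring]

lemma radialCLM_smul_vec (c c' lam : ℝ) (y : E) :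
    radialCLM (N := N) c c' (lam • y) = radialCLM (N := N) c (c' * lam^2) y := by
  refine ContinuousLinearMap.ext fun w => ?_
  rw [radialCLM_apply, radialCLM_apply, real_inner_smul_left, smul_smul]
  congr 1
  rw [show c' * (lam * ⟪y, w⟫) * lam = c' * lam ^ 2 * ⟪y, w⟫ by ring]
lemma touch_false {p : ℝ} (hN : 2 ≤ N) (hpN : (N:ℝ) < p)
    {u : E → ℝ}
    (hC1 : ContDiffOn ℝ 1 u {x : E | 1 < ‖x‖})
    (hdiff : DifferentiableOn ℝ (pFlux N p u) {x : E | 1 < ‖x‖})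
    (hsup : ∀ x ∈ {x : E | 1 < ‖x‖}, -pLaplacian N p u x ≥ 0)
    {t δ c : ℝ} (ht : 0 < t) (hδ : 0 < δ)
    {x₀ : E} (hx₀ : 1 < ‖x₀‖)
    (hmin : IsLocalMin
      (fun x => u x - t * (‖x‖ ^ ((p - N)/(p-1)) + δ * ‖x‖ - c)) x₀) :
    False := by
  have hΩ : IsOpen {x : E | 1 < ‖x‖} := isOpen_lt continuous_const continuous_norm
  have hx₀Ω : x₀ ∈ {x : E | 1 < ‖x‖} := hx₀
  have hNR : (2:ℝ) ≤ (N:ℝ) := by exact_mod_cast hN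
  have hp2 : 2 < p := lt_of_le_of_lt hNR hpN
  set α : ℝ := (p - N)/(p-1) with hαdef
  have hp1 : (0:ℝ) < p - 1 := by linarith
  have hα : α * (p-1) = p - N := by rw [hαdef]; field_simp
  have hαpos : 0 < α := div_pos (by linarith) hp1
  have hx₀ne : x₀ ≠ 0 := by
    intro h; rw [h] at hx₀; simp at hx₀; linarith
  have hrpos : (0:ℝ) < ‖x₀‖ := by linarith
  set v : E → ℝ := fun x => t * (‖x‖ ^ α + δ * ‖x‖ - c) with hvdef
  set Gv : E → E := fun x =>
    (t*α) • (‖x‖ ^ (α-2) • x) + (t*δ) • (‖x‖ ^ ((-1):ℝ) • x) with hGvdef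
  -- gradient of v
  have hGv : ∀ x : E, x ≠ 0 → HasGradientAt v (Gv x) x := by
    intro x hx
    have h1 := hasFDerivAt_norm_rpow_ne (N := N) α hx
    have h2 := hasFDerivAt_norm' (N := N) hx
    have hF := (((h1.add (h2.const_mul δ)).sub_const c).const_mul t)
    rw [hasGradientAt_iff_hasFDerivAt]
    refine hF.congr_fderiv (Eq.symm ?_)
    ext w
    rw [hGvdef]
    simp only [InnerProductSpace.toDual_apply_apply, inner_add_left, real_inner_smul_left,
      ContinuousLinearMap.smul_apply, ContinuousLinearMap.add_apply,
      ContinuousLinearMap.coe_smul', Pi.smul_apply, innerSL_apply_apply, smul_eq_mul]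
    ring
  -- fderiv of Gv at x₀
  set d₁ : ℝ := t*α*‖x₀‖^(α-2) + t*δ*‖x₀‖^((-1):ℝ) with hd₁def
  set d₂ : ℝ := t*α*(α-2)*‖x₀‖^(α-4) - t*δ*‖x₀‖^((-3):ℝ) with hd₂def
  have hGvd : HasFDerivAt Gv (radialCLM (N := N) d₁ d₂ x₀) x₀ := by
    have h1 := (hasFDerivAt_rpow_smul (N := N) (α-2) hx₀ne).const_smul (t*α)
    have h2 := (hasFDerivAt_rpow_smul (N := N) ((-1):ℝ) hx₀ne).const_smul (t*δ)
    have h := h1.add h2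
    refine h.congr_fderiv (Eq.symm ?_)
    refine ContinuousLinearMap.ext fun w => ?_
    simp only [ContinuousLinearMap.add_apply, ContinuousLinearMap.coe_smul',
      Pi.smul_apply, radialCLM_apply]
    rw [hd₁def, hd₂def,
      show (α-2)-2 = α-4 by ring, show ((-1):ℝ)-2 = -3 by norm_num]
    module
  -- u differentiable at x₀, gradients match
  have hud : DifferentiableAt ℝ u x₀ :=
    (hC1.differentiableOn one_ne_zero).differentiableAt (hΩ.mem_nhds hx₀Ω)
  have hvgrad := hGv x₀ hx₀ne
  have hfd0 : fderiv ℝ u x₀ - (InnerProductSpace.toDual ℝ E) (Gv x₀) = 0 :=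
    hmin.hasFDerivAt_eq_zero (hud.hasFDerivAt.sub hvgrad.hasFDerivAt)
  have hgu : HasGradientAt u (Gv x₀) x₀ := by
    rw [hasGradientAt_iff_hasFDerivAt, ← sub_eq_zero.mp hfd0]
    exact hud.hasFDerivAt
  have ha : gradient u x₀ = Gv x₀ := hgu.gradient
  -- the common gradient a = d₁ • x₀
  have hGvx₀ : Gv x₀ = d₁ • x₀ := by
    show (t*α) • (‖x₀‖ ^ (α-2) • x₀) + (t*δ) • (‖x₀‖ ^ ((-1):ℝ) • x₀) = d₁ • x₀
    rw [hd₁def, smul_smul, smul_smul, ← add_smul]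
  have hlampos : 0 < d₁ := by
    rw [hd₁def]
    have h1 := Real.rpow_pos_of_pos hrpos (α-2)
    have h2 := Real.rpow_pos_of_pos hrpos ((-1):ℝ)
    positivity
  have hane : Gv x₀ ≠ 0 := by
    rw [hGvx₀]
    exact smul_ne_zero (ne_of_gt hlampos) hx₀ne
  set a : E := Gv x₀ with hadef
  have hna : 0 < ‖a‖ := norm_pos_iff.2 hane
  -- differentiability of the gradient of u at x₀
  have hpfd : DifferentiableAt ℝ (pFlux N p u) x₀ :=
    hdiff.differentiableAt (hΩ.mem_nhds hx₀Ω)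
  have hbne : pFlux N p u x₀ ≠ 0 := by
    intro h
    have hnp := norm_pFlux (N := N) hp2 u x₀
    rw [h, norm_zero, ha] at hnp
    have h3 := Real.rpow_pos_of_pos hna (p-1)
    rw [hadef] at h3
    linarith
  have hgud : DifferentiableAt ℝ (fun x => gradient u x) x₀ := by
    have hfun : (fun x : E => gradient u x)
        = fun x => ‖pFlux N p u x‖ ^ ((2-p)/(p-1)) • pFlux N p u x :=
      funext (fun x => gradient_eq_pflux_inv hp2 u x)
    rw [hfun]
    exact ((hasFDerivAt_rpow_smul (N := N) ((2-p)/(p-1)) hbne).differentiableAt).comp x₀ hpfd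
  have hHu : HasFDerivAt (fun x => gradient u x) (fderiv ℝ (fun x => gradient u x) x₀) x₀ :=
    hgud.hasFDerivAt
  set Hu := fderiv ℝ (fun x => gradient u x) x₀ with hHudef
  -- the derivative of Φ b = ‖b‖^(p-2) • b at a
  set c₁ : ℝ := ‖a‖ ^ (p-2) with hc₁def
  set c₂ : ℝ := (p-2) * ‖a‖ ^ (p-4) with hc₂def
  have hΦ : HasFDerivAt (fun b : E => ‖b‖^(p-2) • b) (radialCLM (N := N) c₁ c₂ a) a := by
    have h := hasFDerivAt_rpow_smul (N := N) (p-2) hane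
    rw [show (p-2)-2 = p-4 by ring] at h
    exact h
  -- chain rule for pFlux u
  have hΦ' : HasFDerivAt (fun b : E => ‖b‖^(p-2) • b) (radialCLM (N := N) c₁ c₂ a)
      ((fun x => gradient u x) x₀) := by
    simpa [ha] using hΦ
  have hchain_u : HasFDerivAt (pFlux N p u) ((radialCLM (N := N) c₁ c₂ a).comp Hu) x₀ := by
    have h := hΦ'.comp x₀ hHu
    exact h
  have hfderiv_u : fderiv ℝ (pFlux N p u) x₀ = (radialCLM (N := N) c₁ c₂ a).comp Hu :=
    hchain_u.fderiv
  -- chain rule for pFlux v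
  have hne0 : ∀ᶠ x in nhds x₀, x ≠ 0 :=
    isOpen_compl_singleton.eventually_mem (by simpa using hx₀ne)
  have hchain_v : HasFDerivAt (pFlux N p v)
      ((radialCLM (N := N) c₁ c₂ a).comp (radialCLM (N := N) d₁ d₂ x₀)) x₀ := by
    have hΦv : HasFDerivAt ((fun b : E => ‖b‖^(p-2) • b) ∘ Gv)
        ((radialCLM (N := N) c₁ c₂ a).comp (radialCLM (N := N) d₁ d₂ x₀)) x₀ := by
      have hΦ'' : HasFDerivAt (fun b : E => ‖b‖^(p-2) • b) (radialCLM (N := N) c₁ c₂ a)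
          (Gv x₀) := hΦ
      exact hΦ''.comp x₀ hGvd
    apply hΦv.congr_of_eventuallyEq
    filter_upwards [hne0] with x hx
    show pFlux N p v x = ((fun b : E => ‖b‖^(p-2) • b) ∘ Gv) x
    rw [pFlux, (hGv x hx).gradient]
    rfl
  -- second derivative test
  have hgsub : ∀ᶠ x in nhds x₀,
      HasGradientAt (fun y => u y - v y) (gradient u x - Gv x) x := by
    filter_upwards [hΩ.eventually_mem hx₀Ω, hne0] with x hxΩ hx0
    have hudx : DifferentiableAt ℝ u x :=
      (hC1.differentiableOn one_ne_zero).differentiableAt (hΩ.mem_nhds hxΩ)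
    exact HasGradientAt.sub'' hudx.hasGradientAt (hGv x hx0)
  have hHsub : HasFDerivAt (fun x => gradient u x - Gv x)
      (Hu - radialCLM (N := N) d₁ d₂ x₀) x₀ := hHu.sub hGvd
  have hminuv : IsLocalMin (fun x => u x - v x) x₀ := hmin
  have hpsd : ∀ w, 0 ≤ ⟪(Hu - radialCLM (N := N) d₁ d₂ x₀) w, w⟫ :=
    fun w => second_deriv_test hgsub hHsub hminuv w
  -- decompose the p-Laplacian of u at x₀
  have hsum : pLaplacian N p u x₀ =
      (∑ i, ⟪radialCLM (N := N) c₁ c₂ a ((Hu - radialCLM (N := N) d₁ d₂ x₀) ((bE) i)), (bE) i⟫)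
      + ∑ i, ⟪radialCLM (N := N) c₁ c₂ a ((radialCLM (N := N) d₁ d₂ x₀) ((bE) i)), (bE) i⟫ := by
    rw [pLaplacian, hfderiv_u, ← Finset.sum_add_distrib]
    refine Finset.sum_congr rfl fun i _ => ?_
    rw [← inner_add_left, ContinuousLinearMap.comp_apply, ← map_add,
      ContinuousLinearMap.sub_apply, sub_add_cancel]
  have hc₁pos : 0 < c₁ := Real.rpow_pos_of_pos hna _
  have hc₂nonneg : 0 ≤ c₂ :=
    mul_nonneg (by linarith) (le_of_lt (Real.rpow_pos_of_pos hna _))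
  have hS1 : 0 ≤ ∑ i,
      ⟪radialCLM (N := N) c₁ c₂ a ((Hu - radialCLM (N := N) d₁ d₂ x₀) ((bE) i)), (bE) i⟫ :=
    sum_inner_radial_psd (le_of_lt hc₁pos) hc₂nonneg a _ hpsd
  -- the explicit second sum
  have hS2eq : ∑ i, ⟪radialCLM (N := N) c₁ c₂ a ((radialCLM (N := N) d₁ d₂ x₀) ((bE) i)), (bE) i⟫
      = c₁*d₁*N + (c₁*d₂ + (c₂*d₁^2)*d₁ + (c₂*d₁^2)*d₂*‖x₀‖^2)*‖x₀‖^2 := by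
    rw [show radialCLM (N := N) c₁ c₂ a = radialCLM (N := N) c₁ (c₂*d₁^2) x₀ by
      rw [hGvx₀]; exact radialCLM_smul_vec c₁ c₂ d₁ x₀]
    exact sum_inner_radial_comp c₁ (c₂*d₁^2) d₁ d₂ x₀
  have hnorma : ‖a‖ = d₁ * ‖x₀‖ := by
    rw [hGvx₀, norm_smul, Real.norm_eq_abs, abs_of_pos hlampos]
  have hS2pos : 0 < c₁*d₁*N + (c₁*d₂ + (c₂*d₁^2)*d₁ + (c₂*d₁^2)*d₂*‖x₀‖^2)*‖x₀‖^2 := by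
    have hpq : ‖a‖^(p-4) * ‖a‖^2 = ‖a‖^(p-2) := by
      rw [← Real.rpow_natCast ‖a‖ 2, ← Real.rpow_add hna]
      congr 1
      push_cast; ring
    have h2a : ‖a‖^2 = d₁^2 * ‖x₀‖^2 := by rw [hnorma]; ring
    have hstep1 : (c₂*d₁^2)*‖x₀‖^2 = (p-2)*c₁ := by
      rw [hc₂def, hc₁def]
      linear_combination (-(p-2)*‖a‖^(p-4))*h2a + (p-2)*hpq
    have h2 : ‖x₀‖^(α-4) * ‖x₀‖^2 = ‖x₀‖^(α-2) := by
      rw [← Real.rpow_natCast ‖x₀‖ 2, ← Real.rpow_add hrpos]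
      congr 1
      push_cast; ring
    have h3 : ‖x₀‖^((-3):ℝ) * ‖x₀‖^2 = ‖x₀‖^((-1):ℝ) := by
      rw [← Real.rpow_natCast ‖x₀‖ 2, ← Real.rpow_add hrpos]
      norm_num
    have hd2r : d₂*‖x₀‖^2 = t*α*(α-2)*‖x₀‖^(α-2) - t*δ*‖x₀‖^((-1):ℝ) := by
      rw [hd₂def]
      linear_combination (t*α*(α-2))*h2 - (t*δ)*h3
    have hkey : c₁*d₁*(N:ℝ) + (c₁*d₂ + (c₂*d₁^2)*d₁ + (c₂*d₁^2)*d₂*‖x₀‖^2)*‖x₀‖^2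
        = c₁ * (((N:ℝ)+p-2)*d₁ + (p-1)*(d₂*‖x₀‖^2)) := by
      linear_combination (d₁ + d₂*‖x₀‖^2) * hstep1
    have hlin : ((N:ℝ)+p-2)*d₁ + (p-1)*(d₂*‖x₀‖^2) = t*δ*((N:ℝ)-1)*‖x₀‖^((-1):ℝ) := by
      rw [hd₁def]
      linear_combination (p-1)*hd2r + (t*α*‖x₀‖^(α-2))*hα
    rw [hkey, hlin]
    have hBpos := Real.rpow_pos_of_pos hrpos ((-1):ℝ)
    have hN1 : (0:ℝ) < (N:ℝ) - 1 := by linarith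
    positivity
  have hΔ : -pLaplacian N p u x₀ ≥ 0 := hsup x₀ hx₀Ω
  rw [hsum] at hΔ
  linarith


lemma barrier_le (hN : 2 ≤ N) {p : ℝ} (hpN : (N:ℝ) < p) {u : E → ℝ}
    (hC1 : ContDiffOn ℝ 1 u {x : E | 1 < ‖x‖})
    (hdiff : DifferentiableOn ℝ (pFlux N p u) {x : E | 1 < ‖x‖})
    (hsup : ∀ x ∈ {x : E | 1 < ‖x‖}, -pLaplacian N p u x ≥ 0)
    (hnn : ∀ x : E, 1 < ‖x‖ → 0 ≤ u x)
    {R t δ : ℝ} (hR : 3 ≤ R) (ht : 0 < t) (hδ : 0 < δ)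
    (hbd : ∀ x : E, ‖x‖ = R →
      t * (R ^ ((p - N)/(p-1)) + δ * R - ((2:ℝ) ^ ((p - N)/(p-1)) + δ * 2)) ≤ u x) :
    ∀ x : E, 2 ≤ ‖x‖ → ‖x‖ ≤ R →
      t * (‖x‖ ^ ((p - N)/(p-1)) + δ * ‖x‖ - ((2:ℝ) ^ ((p - N)/(p-1)) + δ * 2)) ≤ u x := by
  have hNR : (2:ℝ) ≤ (N:ℝ) := by exact_mod_cast hN
  set α : ℝ := (p - N)/(p-1) with hαdef
  set c : ℝ := (2:ℝ) ^ α + δ * 2 with hcdef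
  set v : E → ℝ := fun x => t * (‖x‖ ^ α + δ * ‖x‖ - c) with hvdef
  set K : Set E := {x : E | 2 ≤ ‖x‖ ∧ ‖x‖ ≤ R} with hKdef
  have hNpos : 0 < N := by omega
  have hKne : K.Nonempty := by
    refine ⟨(2:ℝ) • (EuclideanSpace.basisFun (Fin N) ℝ) ⟨0, hNpos⟩, ?_⟩
    have hb1 : ‖(EuclideanSpace.basisFun (Fin N) ℝ) ⟨0, hNpos⟩‖ = 1 :=
      (EuclideanSpace.basisFun (Fin N) ℝ).orthonormal.1 _
    constructor <;> rw [norm_smul, Real.norm_eq_abs, hb1] <;> simp <;> linarith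
  have hKcomp : IsCompact K := by
    apply Metric.isCompact_of_isClosed_isBounded
    · exact IsClosed.inter (isClosed_le continuous_const continuous_norm)
        (isClosed_le continuous_norm continuous_const)
    · apply (Metric.isBounded_closedBall (x := (0:E)) (r := R)).subset
      intro x hx
      rw [Metric.mem_closedBall, dist_zero_right]
      exact hx.2
  have hKΩ : K ⊆ {x : E | 1 < ‖x‖} := fun x hx => by
    have := hx.1; simp only [Set.mem_setOf_eq]; linarith
  have hvcont : ∀ x : E, x ≠ 0 → ContinuousAt v x := by
    intro x hx
    have h1 : ContinuousAt (fun x : E => ‖x‖ ^ α) x :=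
      (Real.continuousAt_rpow_const ‖x‖ α (Or.inl (norm_ne_zero_iff.2 hx))).comp
        continuous_norm.continuousAt
    exact continuousAt_const.mul
      ((h1.add (continuousAt_const.mul continuous_norm.continuousAt)).sub continuousAt_const)
  have hcont : ContinuousOn (fun x => u x - v x) K := by
    apply ContinuousOn.sub
    · exact (hC1.continuousOn).mono hKΩ
    · intro x hx
      exact (hvcont x (by
        intro h0; rw [h0] at hx; have := hx.1; rw [norm_zero] at this; linarith)).continuousWithinAt
  obtain ⟨x₀, hx₀K, hmin⟩ := hKcomp.exists_isMinOn hKne hcont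
  have hp1 : (0:ℝ) < p - 1 := by linarith
  have hαpos : 0 < α := div_pos (by linarith) hp1
  -- the minimum is attained on the boundary, and is nonnegative there
  have hmin0 : 0 ≤ u x₀ - v x₀ := by
    rcases eq_or_lt_of_le hx₀K.1 with h2 | h2
    · -- inner boundary
      have hv0 : v x₀ = 0 := by rw [hvdef]; simp only; rw [← h2, hcdef]; ring
      rw [hv0, sub_zero]
      exact hnn x₀ (by rw [← h2]; norm_num)
    · rcases eq_or_lt_of_le hx₀K.2 with h3 | h3
      · -- outer boundary
        have := hbd x₀ h3
        rw [hvdef]; simp only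
        rw [h3]
        linarith
      · -- interior: impossible
        exfalso
        have hop : IsOpen {x : E | 2 < ‖x‖ ∧ ‖x‖ < R} :=
          IsOpen.inter (isOpen_lt continuous_const continuous_norm)
            (isOpen_lt continuous_norm continuous_const)
        have hloc : IsLocalMin (fun x => u x - v x) x₀ :=
          hmin.isLocalMin (Filter.mem_of_superset (hop.mem_nhds ⟨h2, h3⟩)
            (fun x hx => ⟨le_of_lt hx.1, le_of_lt hx.2⟩))
        exact touch_false hN hpN hC1 hdiff hsup ht hδ (by linarith) hloc
  intro x hx1 hx2
  have hxK : x ∈ K := ⟨hx1, hx2⟩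
  have := hmin hxK
  simp only [Set.mem_setOf_eq] at this
  have : u x₀ - v x₀ ≤ u x - v x := this
  show v x ≤ u x
  linarith

set_option maxHeartbeats 1600000 in
/-- If `N ≥ 2`, `p > N`, and `u ≥ 0` is classically `p`-superharmonic on `{‖x‖ > 1}`, then
there is `C > 0` with `m(r) = inf_{r < ‖x‖ < 2r} u(x) ≤ C r^((p-N)/(p-1))` for `r ≥ 2`. -/
theorem m_upper_bound_p_gt_N (N : ℕ) (hN : 2 ≤ N) (p : ℝ) (hpN : (N : ℝ) < p)
    (u : EuclideanSpace ℝ (Fin N) → ℝ)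
    (hu_nonneg : ∀ x : EuclideanSpace ℝ (Fin N), 1 < ‖x‖ → 0 ≤ u x)
    (hu_super : IsPSupersolution N p u (fun _ => 0)
      {x : EuclideanSpace ℝ (Fin N) | 1 < ‖x‖}) :
    ∃ C : ℝ, 0 < C ∧ ∀ r : ℝ, 2 ≤ r →
      sInf (u '' {x : EuclideanSpace ℝ (Fin N) | r < ‖x‖ ∧ ‖x‖ < 2 * r}) ≤
        C * r ^ ((p - (N : ℝ)) / (p - 1)) := by
  obtain ⟨hC1, hdiff, hsup0⟩ := hu_super
  have hsup : ∀ x ∈ {x : EuclideanSpace ℝ (Fin N) | 1 < ‖x‖}, -pLaplacian N p u x ≥ 0 :=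
    fun x hx => hsup0 x hx
  have hNR : (2:ℝ) ≤ (N:ℝ) := by exact_mod_cast hN
  have hp1 : (0:ℝ) < p - 1 := by linarith
  set α : ℝ := (p - (N:ℝ))/(p-1) with hαdef
  have hαpos : 0 < α := div_pos (by linarith) hp1
  have hNpos : 0 < N := by omega
  set e₀ : EuclideanSpace ℝ (Fin N) := (EuclideanSpace.basisFun (Fin N) ℝ) ⟨0, hNpos⟩ with he₀
  have he₀n : ‖e₀‖ = 1 := (EuclideanSpace.basisFun (Fin N) ℝ).orthonormal.1 _
  set x₁ : EuclideanSpace ℝ (Fin N) := (5/2:ℝ) • e₀ with hx₁def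
  have hx₁n : ‖x₁‖ = 5/2 := by
    rw [hx₁def, norm_smul, Real.norm_eq_abs, he₀n]; norm_num
  have hu₁ : 0 ≤ u x₁ := hu_nonneg x₁ (by rw [hx₁n]; norm_num)
  set κ : ℝ := (5/2:ℝ)^α - (2:ℝ)^α with hκdef
  have hκpos : 0 < κ := by
    rw [hκdef]
    have := Real.rpow_lt_rpow (by norm_num : (0:ℝ) ≤ 2) (by norm_num : (2:ℝ) < 5/2) hαpos
    linarith
  refine ⟨2*(u x₁)/κ*(3/2:ℝ)^α + 1, ?_, ?_⟩
  · have h32 : (0:ℝ) < (3/2:ℝ)^α := Real.rpow_pos_of_pos (by norm_num) _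
    have : 0 ≤ 2*(u x₁)/κ*(3/2:ℝ)^α := by positivity
    linarith
  intro r hr
  set R : ℝ := 3*r/2 with hRdef
  have hR3 : 3 ≤ R := by rw [hRdef]; linarith
  have hRpos : 0 < R := by linarith
  set δ : ℝ := R^(α-1) with hδdef
  have hδpos : 0 < δ := Real.rpow_pos_of_pos hRpos _
  -- the minimum of u on the sphere of radius R
  set S : Set (EuclideanSpace ℝ (Fin N)) := {x | ‖x‖ = R} with hSdef
  have hScomp : IsCompact S := by
    apply Metric.isCompact_of_isClosed_isBounded
    · exact isClosed_eq continuous_norm continuous_const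
    · apply (Metric.isBounded_closedBall (x := (0:EuclideanSpace ℝ (Fin N))) (r := R)).subset
      intro x hx
      rw [Metric.mem_closedBall, dist_zero_right]
      exact le_of_eq hx
  have hSne : S.Nonempty := by
    refine ⟨R • e₀, ?_⟩
    show ‖R • e₀‖ = R
    rw [norm_smul, Real.norm_eq_abs, he₀n, abs_of_pos hRpos]; ring
  have hSΩ : ∀ x ∈ S, 1 < ‖x‖ := fun x hx => by
    have : ‖x‖ = R := hx
    linarith
  have hucont : ContinuousOn u S := (hC1.continuousOn).mono (fun x hx => hSΩ x hx)
  obtain ⟨xs, hxsS, hminS⟩ := hScomp.exists_isMinOn hSne hucont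
  have hxsn : ‖xs‖ = R := hxsS
  -- sInf over the annulus is at most u xs
  have hann : xs ∈ {x : EuclideanSpace ℝ (Fin N) | r < ‖x‖ ∧ ‖x‖ < 2 * r} := by
    constructor <;> rw [hxsn, hRdef] <;> linarith
  have hbdd : BddBelow (u '' {x : EuclideanSpace ℝ (Fin N) | r < ‖x‖ ∧ ‖x‖ < 2 * r}) := by
    refine ⟨0, fun y hy => ?_⟩
    obtain ⟨x, hx, rfl⟩ := hy
    exact hu_nonneg x (by have := hx.1; linarith)
  have hsInf : sInf (u '' {x : EuclideanSpace ℝ (Fin N) | r < ‖x‖ ∧ ‖x‖ < 2 * r}) ≤ u xs :=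
    csInf_le hbdd ⟨xs, hann, rfl⟩
  have hrα : 0 < r^α := Real.rpow_pos_of_pos (by linarith) _
  -- main bound : u xs ≤ C r^α
  have hmain : u xs ≤ (2*(u x₁)/κ*(3/2:ℝ)^α) * r^α := by
    rcases le_or_gt (u xs) 0 with hM | hM
    · have : 0 ≤ (2*(u x₁)/κ*(3/2:ℝ)^α) * r^α := by positivity
      linarith
    · -- apply the comparison estimate
      set F : ℝ := R^α + δ*R - ((2:ℝ)^α + δ*2) with hFdef
      have hFpos : 0 < F := by
        rw [hFdef]
        have h1 : (2:ℝ)^α < R^α :=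
          Real.rpow_lt_rpow (by norm_num) (by linarith) hαpos
        have h2 : δ*2 < δ*R := by nlinarith
        linarith
      set t : ℝ := u xs / F with htdef
      have ht : 0 < t := div_pos hM hFpos
      have htF : t * F = u xs := by
        rw [htdef]; field_simp
      have hbd : ∀ x : EuclideanSpace ℝ (Fin N), ‖x‖ = R →
          t * (R ^ α + δ * R - ((2:ℝ) ^ α + δ * 2)) ≤ u x := by
        intro x hx
        have : u xs ≤ u x := hminS hx
        rw [show R ^ α + δ * R - ((2:ℝ) ^ α + δ * 2) = F by rw [hFdef], htF]
        exact this
      have hbar := barrier_le hN hpN hC1 hdiff hsup hu_nonneg hR3 ht hδpos hbd x₁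
        (by rw [hx₁n]; norm_num) (by rw [hx₁n]; linarith)
      rw [hx₁n, ← hαdef] at hbar
      -- t ≤ u x₁ / κ
      have htκ : t * κ ≤ u x₁ := by
        have hδ52 : δ*2 ≤ δ*(5/2) := by nlinarith
        have : t * κ ≤ t * ((5/2:ℝ)^α + δ*(5/2) - ((2:ℝ)^α + δ*2)) := by
          rw [hκdef]
          apply mul_le_mul_of_nonneg_left _ (le_of_lt ht)
          linarith
        exact le_trans this hbar
      -- F ≤ 2 R^α
      have hδR : δ * R = R^α := by
        rw [hδdef]
        nth_rewrite 2 [← Real.rpow_one R]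
        rw [← Real.rpow_add hRpos]
        congr 1; ring
      have hF2 : F ≤ 2 * R^α := by
        rw [hFdef, hδR]
        have h1 : 0 < (2:ℝ)^α := Real.rpow_pos_of_pos (by norm_num) _
        have h2 : 0 ≤ δ*2 := by positivity
        linarith
      have hRα : R^α = (3/2:ℝ)^α * r^α := by
        rw [hRdef, show 3*r/2 = (3/2)*r by ring, Real.mul_rpow (by norm_num) (by linarith)]
      have ht1 : t ≤ u x₁ / κ := (le_div_iff₀ hκpos).2 htκ
      have h5 : u xs ≤ (u x₁/κ) * (2*R^α) := by
        calc u xs = t*F := htF.symm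
          _ ≤ t*(2*R^α) := by nlinarith
          _ ≤ (u x₁/κ) * (2*R^α) := by
              apply mul_le_mul_of_nonneg_right ht1
              positivity
      rw [hRα] at h5
      calc u xs ≤ (u x₁/κ) * (2*((3/2:ℝ)^α * r^α)) := h5
        _ = (2*(u x₁)/κ*(3/2:ℝ)^α) * r^α := by ring
  calc sInf (u '' {x : EuclideanSpace ℝ (Fin N) | r < ‖x‖ ∧ ‖x‖ < 2 * r}) ≤ u xs := hsInf
    _ ≤ (2*(u x₁)/κ*(3/2:ℝ)^α) * r^α := hmain
    _ ≤ (2*(u x₁)/κ*(3/2:ℝ)^α + 1) * r^α := by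
        apply mul_le_mul_of_nonneg_right _ (le_of_lt hrα)
        linarith
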